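/- Let k and n be positive integers and ζ = exp(2πi/k). Let s₀,…,s_{k−1} be k-th roots of unity such that the circulant matrix S = circ(s₀,…,s_{k−1}) is a Butson Hadamard matrix in BH(k,k). Let H ∈ BH(kn+k, k) have rows and columns indexed by {0,…,k−1} ⊔ ({0,…,k−1} × {0,…,n−1}) with top-left k × k block equal to S, with H(i, (c,u)) = ζ^{ic}, and with H((c,u), i) = ζ^{−ic} for all i, c, u. Fix m ∈ {0,…,k−1} and a k-th root of unity ω, and let K be the matrix obtained from H by multiplying each entry H(i, (m,u)) (for i ∈ {0,…,k−1} and 0 ≤ u ≤ n−1) by ω and each entry H((m,u), i) by conj(ω), leaving all other entries unchanged. Then K is a Butson Hadamard matrix in BH(kn+k, k). -/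

import Mathlib

open Complex Finset Matrix

private lemma aux_conj_mul_self {z : ℂ} {k : ℕ} (hk : k ≠ 0) (hz : z ^ k = 1) :
    (starRingEnd ℂ) z * z = 1 := by
  have h1 : ‖z‖ = 1 := Complex.norm_eq_one_of_pow_eq_one hz hk
  rw [mul_comm, Complex.mul_conj, Complex.normSq_eq_norm_sq, h1]
  norm_num

/-- Switching a generalised Hall set: if `H ∈ BH(kn+k, k)` has circulant top-left block
`S ∈ BH(k,k)`, top-right block `F_k ⊗ j_n` and bottom-left block `F_k* ⊗ j_nᵀ`, then
multiplying the `m`-th block of the top-right part by a `k`-th root of unity `ω` and the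
`m`-th block of the bottom-left part by `conj ω` yields a matrix in `BH(kn+k, k)`. -/
theorem stmt_4 (k n : ℕ) (hk : 0 < k) (hn : 0 < n)
    (ζ : ℂ) (hζ : ζ = Complex.exp (2 * Real.pi * Complex.I / k))
    (s : Fin k → ℂ) (hs : ∀ j, s j ^ k = 1)
    (S : Matrix (Fin k) (Fin k) ℂ) (hS : ∀ i i', S i i' = s (i' - i))
    (hSHad : S * S.conjTranspose = (k : ℂ) • 1)
    (H : Matrix (Fin k ⊕ Fin k × Fin n) (Fin k ⊕ Fin k × Fin n) ℂ)
    (hent : ∀ r c, H r c ^ k = 1)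
    (hHad : H * H.conjTranspose = ((k * n + k : ℕ) : ℂ) • 1)
    (hTL : ∀ i i' : Fin k, H (Sum.inl i) (Sum.inl i') = S i i')
    (hTR : ∀ (i c : Fin k) (u : Fin n),
      H (Sum.inl i) (Sum.inr (c, u)) = ζ ^ ((i : ℕ) * (c : ℕ)))
    (hBL : ∀ (i c : Fin k) (u : Fin n),
      H (Sum.inr (c, u)) (Sum.inl i) = (starRingEnd ℂ) (ζ ^ ((i : ℕ) * (c : ℕ))))
    (m : Fin k) (ω : ℂ) (hω : ω ^ k = 1)
    (K : Matrix (Fin k ⊕ Fin k × Fin n) (Fin k ⊕ Fin k × Fin n) ℂ)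
    (hKTL : ∀ i i' : Fin k, K (Sum.inl i) (Sum.inl i') = H (Sum.inl i) (Sum.inl i'))
    (hKTR : ∀ (i c : Fin k) (u : Fin n), K (Sum.inl i) (Sum.inr (c, u)) =
      if c = m then ω * H (Sum.inl i) (Sum.inr (c, u)) else H (Sum.inl i) (Sum.inr (c, u)))
    (hKBL : ∀ (i c : Fin k) (u : Fin n), K (Sum.inr (c, u)) (Sum.inl i) =
      if c = m then (starRingEnd ℂ) ω * H (Sum.inr (c, u)) (Sum.inl i)
      else H (Sum.inr (c, u)) (Sum.inl i))
    (hKBR : ∀ (c c' : Fin k) (u u' : Fin n),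
      K (Sum.inr (c, u)) (Sum.inr (c', u')) = H (Sum.inr (c, u)) (Sum.inr (c', u'))) :
    (∀ r c, K r c ^ k = 1) ∧ K * K.conjTranspose = ((k * n + k : ℕ) : ℂ) • 1 := by
  have hk0 : k ≠ 0 := hk.ne'
  haveI : NeZero k := ⟨hk0⟩
  have hprim : IsPrimitiveRoot ζ k := hζ ▸ Complex.isPrimitiveRoot_exp k hk0
  have hζk : ζ ^ k = 1 := hprim.pow_eq_one
  have hωω : (starRingEnd ℂ) ω * ω = 1 := aux_conj_mul_self hk0 hω
  -- exponents mod k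
  have hmod : ∀ a b : ℕ, a ≡ b [MOD k] → ζ ^ a = ζ ^ b := by
    intro a b h
    have e : ∀ c : ℕ, ζ ^ c = ζ ^ (c % k) := by
      intro c
      conv_lhs => rw [← Nat.mod_add_div c k]
      rw [pow_add, pow_mul, hζk, one_pow, mul_one]
    rw [e a, e b, h]
  -- orthogonality
  have hortho : ∀ a b : Fin k,
      ∑ i : Fin k, ζ ^ ((i : ℕ) * (a : ℕ)) * (starRingEnd ℂ) (ζ ^ ((i : ℕ) * (b : ℕ)))
        = if a = b then (k : ℂ) else 0 := by
    intro a b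
    have hterm : ∀ i : Fin k,
        ζ ^ ((i : ℕ) * (a : ℕ)) * (starRingEnd ℂ) (ζ ^ ((i : ℕ) * (b : ℕ)))
          = (ζ ^ (a : ℕ) * (starRingEnd ℂ) (ζ ^ (b : ℕ))) ^ (i : ℕ) := by
      intro i
      rw [mul_pow, ← pow_mul, ← map_pow, ← pow_mul, mul_comm (a : ℕ), mul_comm (b : ℕ)]
    rw [Finset.sum_congr rfl (fun i _ => hterm i)]
    set x : ℂ := ζ ^ (a : ℕ) * (starRingEnd ℂ) (ζ ^ (b : ℕ)) with hx
    rw [Fin.sum_univ_eq_sum_range (fun i => x ^ i) k]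
    by_cases hab : a = b
    · subst hab
      have : x = 1 := by
        rw [hx, mul_comm]; exact aux_conj_mul_self hk0 (by rw [← pow_mul, mul_comm, pow_mul, hζk, one_pow])
      simp [this]
    · have hbinv : (starRingEnd ℂ) (ζ ^ (b : ℕ)) = (ζ ^ (b : ℕ))⁻¹ := by
        exact eq_inv_of_mul_eq_one_left (aux_conj_mul_self hk0 (show (ζ ^ (b:ℕ)) ^ k = 1 by rw [← pow_mul, mul_comm, pow_mul, hζk, one_pow]))
      have hx1 : x ≠ 1 := by
        rw [hx, hbinv]
        intro hcon
        have hzb : (ζ : ℂ) ^ (b : ℕ) ≠ 0 := by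
          intro h0
          have : (ζ ^ (b:ℕ)) ^ k = 0 := by rw [h0]; exact zero_pow hk0
          rw [← pow_mul, mul_comm, pow_mul, hζk, one_pow] at this
          exact one_ne_zero this
        have : ζ ^ (a : ℕ) = ζ ^ (b : ℕ) := (mul_inv_eq_one₀ hzb).mp hcon
        exact hab (Fin.ext (hprim.pow_inj a.isLt b.isLt this))
      have hxk : x ^ k = 1 := by
        rw [hx, mul_pow, ← pow_mul, mul_comm (a:ℕ), pow_mul, hζk, one_pow, ← map_pow,
          ← pow_mul, mul_comm (b:ℕ), pow_mul, hζk, one_pow]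
        simp
      rw [geom_sum_eq hx1, hxk]
      simp [hab]
  -- expansion of the Hadamard condition for H
  have hH : ∀ r r' : Fin k ⊕ Fin k × Fin n,
      (∑ j : Fin k, H r (Sum.inl j) * (starRingEnd ℂ) (H r' (Sum.inl j)))
        + ∑ c : Fin k, ∑ u : Fin n,
            H r (Sum.inr (c, u)) * (starRingEnd ℂ) (H r' (Sum.inr (c, u)))
        = if r = r' then ((k * n + k : ℕ) : ℂ) else 0 := by
    intro r r'
    have h := congrFun (congrFun hHad r) r'
    simpa [Matrix.mul_apply, Matrix.conjTranspose_apply, Fintype.sum_sum_type,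
      Fintype.sum_prod_type, Matrix.smul_apply, Matrix.one_apply, smul_eq_mul,
      mul_ite, mul_one, mul_zero] using h
  -- circulant eigenvector property
  have heig : ∀ i c' : Fin k,
      ∑ j : Fin k, S i j * ζ ^ ((j : ℕ) * (c' : ℕ))
        = ζ ^ ((i : ℕ) * (c' : ℕ)) * ∑ d : Fin k, s d * ζ ^ ((d : ℕ) * (c' : ℕ)) := by
    intro i c'
    rw [Finset.mul_sum, ← Equiv.sum_comp (Equiv.addLeft i)
      (fun j => S i j * ζ ^ ((j : ℕ) * (c' : ℕ)))]
    apply Finset.sum_congr rfl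
    intro d _
    have h1 : S i (Equiv.addLeft i d) = s d := by
      simp only [Equiv.coe_addLeft, hS, add_sub_cancel_left]
    have h2 : ζ ^ (((Equiv.addLeft i d : Fin k) : ℕ) * (c' : ℕ))
        = ζ ^ ((i : ℕ) * (c' : ℕ)) * ζ ^ ((d : ℕ) * (c' : ℕ)) := by
      rw [← pow_add, ← add_mul]
      apply hmod
      have : ((Equiv.addLeft i d : Fin k) : ℕ) ≡ (i : ℕ) + (d : ℕ) [MOD k] := by
        simp only [Equiv.coe_addLeft, Fin.val_add]
        exact Nat.mod_modEq _ k
      exact this.mul_right _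
    rw [h1, h2]; ring
  -- the key linear relations from mixed rows of H
  have hP : ∀ (i c' : Fin k) (u' : Fin n),
      ζ ^ ((i : ℕ) * (c' : ℕ)) * (∑ d : Fin k, s d * ζ ^ ((d : ℕ) * (c' : ℕ)))
        + ∑ c : Fin k, ζ ^ ((i : ℕ) * (c : ℕ)) *
            (∑ u : Fin n, (starRingEnd ℂ) (H (Sum.inr (c', u')) (Sum.inr (c, u)))) = 0 := by
    intro i c' u'
    have h := hH (Sum.inl i) (Sum.inr (c', u'))
    rw [if_neg (by simp)] at h
    have e1 : ∑ j : Fin k, H (Sum.inl i) (Sum.inl j)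
        * (starRingEnd ℂ) (H (Sum.inr (c', u')) (Sum.inl j))
        = ∑ j : Fin k, S i j * ζ ^ ((j : ℕ) * (c' : ℕ)) := by
      apply Finset.sum_congr rfl
      intro j _
      rw [hTL, hBL, Complex.conj_conj]
    have e2 : ∑ c : Fin k, ∑ u : Fin n, H (Sum.inl i) (Sum.inr (c, u))
        * (starRingEnd ℂ) (H (Sum.inr (c', u')) (Sum.inr (c, u)))
        = ∑ c : Fin k, ζ ^ ((i : ℕ) * (c : ℕ)) *
            (∑ u : Fin n, (starRingEnd ℂ) (H (Sum.inr (c', u')) (Sum.inr (c, u)))) := by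
      apply Finset.sum_congr rfl
      intro c _
      rw [Finset.mul_sum]
      exact Finset.sum_congr rfl fun u _ => by rw [hTR]
    rw [e1, e2, heig i c'] at h
    exact h
  -- extraction of the m-th Fourier coefficient
  have hTm : ∀ (c' : Fin k) (u' : Fin n),
      (k : ℂ) * (∑ u : Fin n, (starRingEnd ℂ) (H (Sum.inr (c', u')) (Sum.inr (m, u))))
        = -(if c' = m then (k : ℂ) else 0)
            * (∑ d : Fin k, s d * ζ ^ ((d : ℕ) * (c' : ℕ))) := by
    intro c' u'
    have h0 : ∑ i : Fin k, (starRingEnd ℂ) (ζ ^ ((i : ℕ) * (m : ℕ))) *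
        (ζ ^ ((i : ℕ) * (c' : ℕ)) * (∑ d : Fin k, s d * ζ ^ ((d : ℕ) * (c' : ℕ)))
          + ∑ c : Fin k, ζ ^ ((i : ℕ) * (c : ℕ)) *
              (∑ u : Fin n, (starRingEnd ℂ) (H (Sum.inr (c', u')) (Sum.inr (c, u))))) = 0 := by
      apply Finset.sum_eq_zero
      intro i _
      rw [hP i c' u', mul_zero]
    have e1 : ∑ i : Fin k, (starRingEnd ℂ) (ζ ^ ((i : ℕ) * (m : ℕ))) *
        (ζ ^ ((i : ℕ) * (c' : ℕ)) * (∑ d : Fin k, s d * ζ ^ ((d : ℕ) * (c' : ℕ))))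
        = (if c' = m then (k : ℂ) else 0)
            * (∑ d : Fin k, s d * ζ ^ ((d : ℕ) * (c' : ℕ))) := by
      rw [← hortho c' m, Finset.sum_mul]
      exact Finset.sum_congr rfl fun i _ => by ring
    have e2 : ∀ c : Fin k, ∑ i : Fin k, (starRingEnd ℂ) (ζ ^ ((i : ℕ) * (m : ℕ))) *
        (ζ ^ ((i : ℕ) * (c : ℕ)) *
          (∑ u : Fin n, (starRingEnd ℂ) (H (Sum.inr (c', u')) (Sum.inr (c, u)))))
        = (if c = m then (k : ℂ) else 0) *
          (∑ u : Fin n, (starRingEnd ℂ) (H (Sum.inr (c', u')) (Sum.inr (c, u)))) := by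
      intro c
      rw [← hortho c m, Finset.sum_mul]
      exact Finset.sum_congr rfl fun i _ => by ring
    have h1 : (if c' = m then (k : ℂ) else 0) * (∑ d : Fin k, s d * ζ ^ ((d : ℕ) * (c' : ℕ)))
        + ∑ c : Fin k, (if c = m then (k : ℂ) else 0) *
            (∑ u : Fin n, (starRingEnd ℂ) (H (Sum.inr (c', u')) (Sum.inr (c, u)))) = 0 := by
      rw [← e1, show (∑ c : Fin k, (if c = m then (k : ℂ) else 0) *
          (∑ u : Fin n, (starRingEnd ℂ) (H (Sum.inr (c', u')) (Sum.inr (c, u)))))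
          = ∑ c : Fin k, ∑ i : Fin k, (starRingEnd ℂ) (ζ ^ ((i : ℕ) * (m : ℕ))) *
              (ζ ^ ((i : ℕ) * (c : ℕ)) *
                (∑ u : Fin n, (starRingEnd ℂ) (H (Sum.inr (c', u')) (Sum.inr (c, u)))))
          from Finset.sum_congr rfl fun c _ => (e2 c).symm,
        Finset.sum_comm, ← Finset.sum_add_distrib, ← h0]
      apply Finset.sum_congr rfl
      intro i _
      simp only [mul_add, Finset.mul_sum]
    have e3 : ∑ c : Fin k, (if c = m then (k : ℂ) else 0) *
        (∑ u : Fin n, (starRingEnd ℂ) (H (Sum.inr (c', u')) (Sum.inr (c, u))))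
        = (k : ℂ) * (∑ u : Fin n, (starRingEnd ℂ) (H (Sum.inr (c', u')) (Sum.inr (m, u)))) := by
      rw [Finset.sum_eq_single m]
      · rw [if_pos rfl]
      · intro c _ hc; rw [if_neg hc, zero_mul]
      · intro hm; exact absurd (Finset.mem_univ m) hm
    rw [e3] at h1
    linear_combination h1
  -- the key off-diagonal vanishing for K
  have htr : ∀ (i c' : Fin k) (u' : Fin n),
      (K * K.conjTranspose) (Sum.inl i) (Sum.inr (c', u')) = 0 := by
    intro i c' u'
    rw [Matrix.mul_apply, Fintype.sum_sum_type]
    simp only [Matrix.conjTranspose_apply, Complex.star_def, Fintype.sum_prod_type]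
    have eA : ∑ j : Fin k, K (Sum.inl i) (Sum.inl j)
        * (starRingEnd ℂ) (K (Sum.inr (c', u')) (Sum.inl j))
        = (if c' = m then ω else 1) *
          (ζ ^ ((i : ℕ) * (c' : ℕ)) * ∑ d : Fin k, s d * ζ ^ ((d : ℕ) * (c' : ℕ))) := by
      have e : ∀ j : Fin k, K (Sum.inl i) (Sum.inl j)
          * (starRingEnd ℂ) (K (Sum.inr (c', u')) (Sum.inl j))
          = (if c' = m then ω else 1) * (S i j * ζ ^ ((j : ℕ) * (c' : ℕ))) := by
        intro j
        rw [hKTL, hTL, hKBL, hBL]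
        by_cases h : c' = m
        · rw [if_pos h, if_pos h, _root_.map_mul, Complex.conj_conj, Complex.conj_conj]; ring
        · rw [if_neg h, if_neg h, Complex.conj_conj, one_mul]
      rw [Finset.sum_congr rfl fun j _ => e j, ← Finset.mul_sum, heig i c']
    have eB : ∀ c : Fin k, ∑ u : Fin n, K (Sum.inl i) (Sum.inr (c, u))
        * (starRingEnd ℂ) (K (Sum.inr (c', u')) (Sum.inr (c, u)))
        = (if c = m then ω else 1) * (ζ ^ ((i : ℕ) * (c : ℕ)) *
            ∑ u : Fin n, (starRingEnd ℂ) (H (Sum.inr (c', u')) (Sum.inr (c, u)))) := by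
      intro c
      have e : ∀ u : Fin n, K (Sum.inl i) (Sum.inr (c, u))
          * (starRingEnd ℂ) (K (Sum.inr (c', u')) (Sum.inr (c, u)))
          = ((if c = m then ω else 1) * ζ ^ ((i : ℕ) * (c : ℕ))) *
              (starRingEnd ℂ) (H (Sum.inr (c', u')) (Sum.inr (c, u))) := by
        intro u
        rw [hKTR, hKBR, hTR]
        by_cases h : c = m
        · rw [if_pos h, if_pos h]
        · rw [if_neg h, if_neg h, one_mul]
      rw [Finset.sum_congr rfl fun u _ => e u, ← Finset.mul_sum, mul_assoc]
    rw [eA, Finset.sum_congr rfl fun c _ => eB c]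
    have hsplit : ∑ c : Fin k, (if c = m then ω else 1) * (ζ ^ ((i : ℕ) * (c : ℕ)) *
          ∑ u : Fin n, (starRingEnd ℂ) (H (Sum.inr (c', u')) (Sum.inr (c, u))))
        = (∑ c : Fin k, ζ ^ ((i : ℕ) * (c : ℕ)) *
            ∑ u : Fin n, (starRingEnd ℂ) (H (Sum.inr (c', u')) (Sum.inr (c, u))))
          + (ω - 1) * (ζ ^ ((i : ℕ) * (m : ℕ)) *
            ∑ u : Fin n, (starRingEnd ℂ) (H (Sum.inr (c', u')) (Sum.inr (m, u)))) := by
      have e : ∀ c : Fin k, (if c = m then ω else 1) * (ζ ^ ((i : ℕ) * (c : ℕ)) *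
            ∑ u : Fin n, (starRingEnd ℂ) (H (Sum.inr (c', u')) (Sum.inr (c, u))))
          = ζ ^ ((i : ℕ) * (c : ℕ)) *
              (∑ u : Fin n, (starRingEnd ℂ) (H (Sum.inr (c', u')) (Sum.inr (c, u))))
            + (if c = m then (ω - 1) * (ζ ^ ((i : ℕ) * (c : ℕ)) *
                ∑ u : Fin n, (starRingEnd ℂ) (H (Sum.inr (c', u')) (Sum.inr (c, u)))) else 0) := by
        intro c
        by_cases h : c = m
        · rw [if_pos h, if_pos h]; ring
        · rw [if_neg h, if_neg h, one_mul, add_zero]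
      rw [Finset.sum_congr rfl fun c _ => e c, Finset.sum_add_distrib]
      congr 1
      rw [Finset.sum_eq_single m]
      · rw [if_pos rfl]
      · intro c _ hc; rw [if_neg hc]
      · intro hm; exact absurd (Finset.mem_univ m) hm
    rw [hsplit]
    have hp := hP i c' u'
    have ht := hTm c' u'
    have hkC : (k : ℂ) ≠ 0 := Nat.cast_ne_zero.mpr hk0
    by_cases h : c' = m
    · subst h
      rw [if_pos rfl] at ht ⊢
      have hTmv : ∑ u : Fin n, (starRingEnd ℂ) (H (Sum.inr (c', u')) (Sum.inr (c', u)))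
          = -∑ d : Fin k, s d * ζ ^ ((d : ℕ) * (c' : ℕ)) := by
        apply mul_left_cancel₀ hkC
        linear_combination ht
      linear_combination hp + (ω - 1) * ζ ^ ((i : ℕ) * (c' : ℕ)) * hTmv
    · rw [if_neg h] at ht ⊢
      have hTmv : ∑ u : Fin n, (starRingEnd ℂ) (H (Sum.inr (c', u')) (Sum.inr (m, u))) = 0 := by
        apply mul_left_cancel₀ hkC
        linear_combination ht
      linear_combination hp + (ω - 1) * ζ ^ ((i : ℕ) * (m : ℕ)) * hTmv
  constructor
  · intro r c
    rcases r with i | ⟨c0, u0⟩ <;> rcases c with i' | ⟨c1, u1⟩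
    · rw [hKTL]; exact hent _ _
    · rw [hKTR]
      by_cases h : c1 = m
      · rw [if_pos h, mul_pow, hω, one_mul]; exact hent _ _
      · rw [if_neg h]; exact hent _ _
    · rw [hKBL]
      by_cases h : c0 = m
      · rw [if_pos h, mul_pow, ← map_pow, hω, _root_.map_one, one_mul]; exact hent _ _
      · rw [if_neg h]; exact hent _ _
    · rw [hKBR]; exact hent _ _
  · ext r r'
    rcases r with i | ⟨c, u⟩ <;> rcases r' with i' | ⟨c', u'⟩
    · -- top-left
      have e : (K * K.conjTranspose) (Sum.inl i) (Sum.inl i')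
          = (H * H.conjTranspose) (Sum.inl i) (Sum.inl i') := by
        rw [Matrix.mul_apply, Matrix.mul_apply, Fintype.sum_sum_type, Fintype.sum_sum_type]
        simp only [Matrix.conjTranspose_apply, Complex.star_def]
        congr 1
        · exact Finset.sum_congr rfl fun j _ => by rw [hKTL, hKTL]
        · apply Finset.sum_congr rfl
          rintro ⟨c0, u0⟩ _
          rw [hKTR, hKTR]
          by_cases h : c0 = m
          · simp only [if_pos h]
            rw [_root_.map_mul]
            linear_combination H (Sum.inl i) (Sum.inr (c0, u0))
              * (starRingEnd ℂ) (H (Sum.inl i') (Sum.inr (c0, u0))) * hωω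
          · simp only [if_neg h]
      rw [e]
      exact congrFun (congrFun hHad _) _
    · -- top-right
      rw [htr i c' u']
      simp [Matrix.smul_apply, Matrix.one_apply]
    · -- bottom-left
      have hsym : (K * K.conjTranspose).conjTranspose = K * K.conjTranspose := by
        rw [Matrix.conjTranspose_mul, Matrix.conjTranspose_conjTranspose]
      have h2 := congrFun (congrFun hsym (Sum.inr (c, u))) (Sum.inl i')
      rw [Matrix.conjTranspose_apply, htr i' c u] at h2
      rw [← h2]
      simp [Matrix.smul_apply, Matrix.one_apply]
    · -- bottom-right
      have horth2 : ∀ a b : Fin k, a ≠ b →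
          ∑ j : Fin k, (starRingEnd ℂ) (ζ ^ ((j : ℕ) * (a : ℕ))) * ζ ^ ((j : ℕ) * (b : ℕ)) = 0 := by
        intro a b hab
        have h3 := congrArg (starRingEnd ℂ) (hortho a b)
        rw [_root_.map_sum, if_neg hab, _root_.map_zero] at h3
        rw [← h3]
        apply Finset.sum_congr rfl
        intro j _
        rw [_root_.map_mul, Complex.conj_conj]
      have e : (K * K.conjTranspose) (Sum.inr (c, u)) (Sum.inr (c', u'))
          = (H * H.conjTranspose) (Sum.inr (c, u)) (Sum.inr (c', u')) := by
        rw [Matrix.mul_apply, Matrix.mul_apply, Fintype.sum_sum_type, Fintype.sum_sum_type]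
        simp only [Matrix.conjTranspose_apply, Complex.star_def]
        congr 1
        · rcases eq_or_ne c c' with rfl | hne
          · apply Finset.sum_congr rfl
            intro j _
            rw [hKBL, hKBL]
            by_cases h : c = m
            · simp only [if_pos h]
              rw [_root_.map_mul, Complex.conj_conj]
              linear_combination H (Sum.inr (c, u)) (Sum.inl j)
                * (starRingEnd ℂ) (H (Sum.inr (c, u')) (Sum.inl j)) * hωω
            · simp only [if_neg h]
          · have eK : ∑ j : Fin k, K (Sum.inr (c, u)) (Sum.inl j)
                * (starRingEnd ℂ) (K (Sum.inr (c', u')) (Sum.inl j))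
                = ((if c = m then (starRingEnd ℂ) ω else 1) *
                    (starRingEnd ℂ) (if c' = m then (starRingEnd ℂ) ω else 1)) *
                  ∑ j : Fin k, (starRingEnd ℂ) (ζ ^ ((j : ℕ) * (c : ℕ))) * ζ ^ ((j : ℕ) * (c' : ℕ)) := by
              rw [Finset.mul_sum]
              apply Finset.sum_congr rfl
              intro j _
              rw [hKBL, hKBL, hBL, hBL]
              by_cases h1 : c = m <;> by_cases h2 : c' = m <;>
                simp only [h1, h2, if_true, if_false, ite_true, ite_false,
                  _root_.map_mul, Complex.conj_conj, _root_.map_one] <;> ring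
            have eH : ∑ j : Fin k, H (Sum.inr (c, u)) (Sum.inl j)
                * (starRingEnd ℂ) (H (Sum.inr (c', u')) (Sum.inl j))
                = ∑ j : Fin k, (starRingEnd ℂ) (ζ ^ ((j : ℕ) * (c : ℕ))) * ζ ^ ((j : ℕ) * (c' : ℕ)) := by
              apply Finset.sum_congr rfl
              intro j _
              rw [hBL, hBL, Complex.conj_conj]
            rw [eK, eH, horth2 c c' hne, mul_zero]
        · apply Finset.sum_congr rfl
          rintro ⟨c0, u0⟩ _
          rw [hKBR, hKBR]
      rw [e]
      exact congrFun (congrFun hHad _) _
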